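/- Let n ≥ 1, m ≥ 1, let x be a word of length m over the alphabet Fin l, and let W be a word over Fin l. Suppose W contains 2n−1 pairwise disjoint factors occ130urring from left to right in the order F₁, F₂, …, F_{2n−1}, where each F_j = x^{p_j} · v_j with p_j ≥ n an integer and v_j a word of length m with v_j ≠ x. Then W is n-divided. -/

import Mathlib

open List Real

/-- A word over the alphabet `Fin l`. -/
abbrev Word (l : ℕ) : Type := List (Fin l)

/-- `u ≻ v`: at the first position where they differ (a position within the length of both),
the letter of `u` is greater than that of `v`. -/
def WGt {l : ℕ} (u v : Word l) : Prop :=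
  ∃ (w u' v' : Word l) (a b : Fin l), b < a ∧ u = w ++ a :: u' ∧ v = w ++ b :: v'

/-- `W` is `n`-divided: `W = W₀W₁⋯Wₙ` with `W₁, …, Wₙ` nonempty and `W₁ ≻ W₂ ≻ ⋯ ≻ Wₙ`. -/
def NDivided {l : ℕ} (n : ℕ) (W : Word l) : Prop :=
  ∃ (W₀ : Word l) (ws : List (Word l)), ws.length = n ∧ (∀ w ∈ ws, w ≠ []) ∧
    ws.Chain' WGt ∧ W = W₀ ++ ws.flatten

/-- `W` contains a `d`-th power of a nonempty word as a factor. -/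
def ContainsPow {l : ℕ} (d : ℕ) (W : Word l) : Prop :=
  ∃ u : Word l, u ≠ [] ∧ (List.replicate d u).flatten <:+: W

lemma wgt_extend {l : ℕ} {u v : Word l} (h : WGt u v) (w s t : Word l) :
    WGt (w ++ (u ++ s)) (w ++ (v ++ t)) := by
  obtain ⟨c, u', v', a, b, hba, hu, hv⟩ := h
  exact ⟨w ++ c, u' ++ s, v' ++ t, a, b, hba, by simp [hu], by simp [hv]⟩

lemma wgt_total {l : ℕ} {u v : Word l} (h : u.length = v.length) (hne : u ≠ v) :
    WGt u v ∨ WGt v u := by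
  induction u generalizing v with
  | nil =>
    cases v with
    | nil => exact absurd rfl hne
    | cons b t => simp at h
  | cons a tu ih =>
    cases v with
    | nil => simp at h
    | cons b tv =>
      rcases lt_trichotomy a b with hab | hab | hab
      · exact Or.inr ⟨[], tv, tu, b, a, hab, rfl, rfl⟩
      · subst hab
        have hne' : tu ≠ tv := fun e => hne (by rw [e])
        rcases ih (by simpa using h) hne' with h' | h'
        · left
          obtain ⟨c, u', v', a', b', hba, hu, hv⟩ := h'
          exact ⟨a :: c, u', v', a', b', hba, by simp [hu], by simp [hv]⟩
        · right
          obtain ⟨c, u', v', a', b', hba, hu, hv⟩ := h'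
          exact ⟨a :: c, u', v', a', b', hba, by simp [hu], by simp [hv]⟩
      · exact Or.inl ⟨[], tu, tv, a, b, hab, rfl, rfl⟩

lemma exists_ws {l : ℕ} (W : Word l) : ∀ (n : ℕ), 1 ≤ n → ∀ (c : ℕ → ℕ) (P : ℕ → Word l),
    (∀ k, k < n → P k <+: W.drop (c k)) →
    (∀ k, k < n → P k ≠ []) →
    (∀ k, k + 1 < n → c k + (P k).length ≤ c (k + 1)) →
    (∀ k, k + 1 < n → ∀ s t : Word l, WGt (P k ++ s) (P (k + 1) ++ t)) →
    ∃ ws : List (Word l), ws.length = n ∧ (∀ w ∈ ws, w ≠ []) ∧ ws.Chain' WGt ∧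
      W.drop (c 0) = ws.flatten ∧ ∃ s, ws.head? = some (P 0 ++ s) := by
  intro n
  induction n with
  | zero => omega
  | succ n ih =>
    intro _ c P hpre hne hmono hchain
    rcases Nat.eq_zero_or_pos n with rfl | hn
    · obtain ⟨s, hs⟩ := hpre 0 (by omega)
      refine ⟨[W.drop (c 0)], rfl, ?_, List.isChain_singleton _, by simp, s, ?_⟩
      · intro w hw
        simp only [List.mem_singleton] at hw
        subst hw
        rw [← hs]
        intro hnil
        exact hne 0 (by omega) (List.append_eq_nil_iff.mp hnil).1
      · simp [← hs]
    · obtain ⟨ws', hlen, hne', hch', hfl, s', hhd⟩ :=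
        ih hn (fun k => c (k + 1)) (fun k => P (k + 1))
          (fun k hk => hpre (k + 1) (by omega))
          (fun k hk => hne (k + 1) (by omega))
          (fun k hk => hmono (k + 1) (by omega))
          (fun k hk => hchain (k + 1) (by omega))
      have h01 : c 0 + (P 0).length ≤ c 1 := hmono 0 (by omega)
      obtain ⟨r, hr⟩ := hpre 0 (by omega)
      set d := c 1 - c 0 with hd
      have hpiece : (W.drop (c 0)).take d = P 0 ++ r.take (d - (P 0).length) := by
        rw [← hr, List.take_append,
          List.take_of_length_le (by omega)]
      refine ⟨(W.drop (c 0)).take d :: ws', by simp [hlen], ?_, ?_, ?_, ?_⟩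
      · intro w hw
        rcases List.mem_cons.mp hw with rfl | hw
        · rw [hpiece]
          intro hnil
          have := (List.append_eq_nil_iff.mp hnil).1
          exact hne 0 (by omega) this
        · exact hne' w hw
      · rw [List.Chain', List.isChain_cons]
        refine ⟨?_, hch'⟩
        intro b hb
        rw [hhd] at hb
        simp only [Option.mem_def, Option.some.injEq] at hb
        subst hb
        rw [hpiece]
        exact hchain 0 (by omega) _ _
      · rw [List.flatten_cons, ← hfl]
        have : W.drop (c 1) = (W.drop (c 0)).drop d := by
          rw [List.drop_drop]
          congr 1
          omega
        rw [this, List.take_append_drop]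
      · exact ⟨r.take (d - (P 0).length), by simp [hpiece]⟩

lemma ndivided_of_cuts {l : ℕ} (n : ℕ) (hn : 1 ≤ n) (W : Word l) (c : ℕ → ℕ) (P : ℕ → Word l)
    (hpre : ∀ k, k < n → P k <+: W.drop (c k))
    (hne : ∀ k, k < n → P k ≠ [])
    (hmono : ∀ k, k + 1 < n → c k + (P k).length ≤ c (k + 1))
    (hchain : ∀ k, k + 1 < n → ∀ s t : Word l, WGt (P k ++ s) (P (k + 1) ++ t)) :
    NDivided n W := by
  obtain ⟨ws, hlen, hnil, hch, hfl, -⟩ := exists_ws W n hn c P hpre hne hmono hchain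
  exact ⟨W.take (c 0), ws, hlen, hnil, hch, by rw [← hfl, List.take_append_drop]⟩

lemma flatten_replicate_length {l : ℕ} (x : Word l) (m : ℕ) (hx : x.length = m) :
    ∀ e : ℕ, ((List.replicate e x).flatten).length = e * m := by
  intro e
  induction e with
  | zero => simp
  | succ e ihe =>
    rw [List.replicate_succ, List.flatten_cons, List.length_append, hx, ihe]
    ring

lemma case_lemma {l : ℕ} (n m : ℕ) (hn : 1 ≤ n) (hm : 1 ≤ m)
    (x : Word l) (hx : x.length = m) (W : Word l)
    (p : Fin (2 * n - 1) → ℕ) (v : Fin (2 * n - 1) → Word l)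
    (hp : ∀ j, n ≤ p j)
    (hvlen : ∀ j, (v j).length = m)
    (q : Fin (2 * n - 1) → ℕ)
    (hocc : ∀ j, ((List.replicate (p j) x).flatten ++ v j) <+: W.drop (q j))
    (horder : ∀ i j : Fin (2 * n - 1), i < j →
      q i + ((List.replicate (p i) x).flatten ++ v i).length ≤ q j)
    (A : Finset (Fin (2 * n - 1))) (hA : n ≤ A.card)
    (E : ℕ → ℕ) (hE : ∀ k, k < n → E k ≤ n)
    (hstep : ∀ k, k + 1 < n → ∀ j j' : Fin (2 * n - 1), j ∈ A → j' ∈ A →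
      ∀ s t : Word l,
      WGt ((List.replicate (E k) x).flatten ++ (v j ++ s))
          ((List.replicate (E (k + 1)) x).flatten ++ (v j' ++ t))) :
    NDivided n W := by
  -- the selected indices
  have hKlt : ∀ k : ℕ, min k (n - 1) < n := fun k => by omega
  set K : ℕ → Fin n := fun k => ⟨min k (n - 1), hKlt k⟩ with hK
  set jj : ℕ → Fin (2 * n - 1) :=
    fun k => A.orderEmbOfFin rfl (Fin.castLE hA (K k)) with hjj
  have hjmem : ∀ k, jj k ∈ A := fun k => Finset.orderEmbOfFin_mem A rfl _
  have hjmono : ∀ k k', k < k' → k' < n → jj k < jj k' := by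
    intro k k' hkk hk'
    apply (A.orderEmbOfFin rfl).strictMono
    simp only [Fin.castLE, Fin.lt_def, hK]
    omega
  set c : ℕ → ℕ := fun k => q (jj k) + (p (jj k) - E k) * m with hc
  set P : ℕ → Word l := fun k => (List.replicate (E k) x).flatten ++ v (jj k) with hP
  have hxe := flatten_replicate_length x m hx
  have hpre : ∀ k, k < n → P k <+: W.drop (c k) := by
    intro k hk
    obtain ⟨r, hr⟩ := hocc (jj k)
    have hep : E k ≤ p (jj k) := (hE k hk).trans (hp (jj k))
    have hsplit : (List.replicate (p (jj k)) x).flatten =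
        (List.replicate (p (jj k) - E k) x).flatten ++ (List.replicate (E k) x).flatten := by
      rw [← List.flatten_append, ← List.replicate_add]
      congr 2
      omega
    have : W.drop (c k) = P k ++ r := by
      rw [hc]
      show W.drop (q (jj k) + (p (jj k) - E k) * m) = _
      rw [← List.drop_drop, ← hr, hsplit, List.append_assoc, List.append_assoc,
        ← hxe (p (jj k) - E k), List.drop_left, hP, List.append_assoc]
    exact ⟨r, this.symm⟩
  have hPlen : ∀ k, (P k).length = E k * m + m := by
    intro k
    rw [hP]
    show ((List.replicate (E k) x).flatten ++ v (jj k)).length = _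
    rw [List.length_append, hxe, hvlen]
  have hne : ∀ k, k < n → P k ≠ [] := by
    intro k hk h
    have := congrArg List.length h
    rw [hPlen] at this
    simp at this
    omega
  have hmono : ∀ k, k + 1 < n → c k + (P k).length ≤ c (k + 1) := by
    intro k hk
    have hep : E k ≤ p (jj k) := (hE k (by omega)).trans (hp (jj k))
    have hord := horder (jj k) (jj (k + 1)) (hjmono k (k + 1) (by omega) hk)
    have hlen : ((List.replicate (p (jj k)) x).flatten ++ v (jj k)).length
        = p (jj k) * m + m := by rw [List.length_append, hxe, hvlen]
    rw [hlen] at hord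
    have harith : (p (jj k) - E k) * m + (E k * m + m) = p (jj k) * m + m := by
      rw [← Nat.add_assoc, ← Nat.add_mul, Nat.sub_add_cancel hep]
    rw [hc, hPlen]
    show q (jj k) + (p (jj k) - E k) * m + (E k * m + m) ≤
      q (jj (k + 1)) + (p (jj (k + 1)) - E (k + 1)) * m
    omega
  have hchain : ∀ k, k + 1 < n → ∀ s t : Word l, WGt (P k ++ s) (P (k + 1) ++ t) := by
    intro k hk s t
    have := hstep k hk (jj k) (jj (k + 1)) (hjmem k) (hjmem (k + 1)) s t
    rw [hP]
    show WGt ((List.replicate (E k) x).flatten ++ v (jj k) ++ s)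
      ((List.replicate (E (k + 1)) x).flatten ++ v (jj (k + 1)) ++ t)
    rw [List.append_assoc, List.append_assoc]
    exact this
  exact ndivided_of_cuts n hn W c P hpre hne hmono hchain

lemma flatten_replicate_succ {l : ℕ} (x : Word l) (e : ℕ) :
    (List.replicate (e + 1) x).flatten = (List.replicate e x).flatten ++ x := by
  rw [List.replicate_succ', List.flatten_append]
  simp

theorem incomparable_periods_divided (l n m : ℕ) (hn : 1 ≤ n) (hm : 1 ≤ m)
    (x : Word l) (hx : x.length = m) (W : Word l)
    (p : Fin (2 * n - 1) → ℕ) (v : Fin (2 * n - 1) → Word l)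
    (hp : ∀ j, n ≤ p j)
    (hv : ∀ j, (v j).length = m ∧ v j ≠ x)
    (q : Fin (2 * n - 1) → ℕ)
    (hocc : ∀ j, ((List.replicate (p j) x).flatten ++ v j) <+: W.drop (q j))
    (horder : ∀ i j : Fin (2 * n - 1), i < j →
      q i + ((List.replicate (p i) x).flatten ++ v i).length ≤ q j) :
    NDivided n W := by
  classical
  have htot : ∀ j : Fin (2 * n - 1), WGt x (v j) ∨ WGt (v j) x := by
    intro j
    rcases wgt_total ((hv j).1.trans hx.symm) (hv j).2 with h | h
    · exact Or.inr h
    · exact Or.inl h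
  set S : Finset (Fin (2 * n - 1)) := Finset.univ.filter (fun j => WGt x (v j)) with hS
  set T : Finset (Fin (2 * n - 1)) := Finset.univ.filter (fun j => WGt (v j) x) with hT
  have hST : S ∪ T = Finset.univ := by
    ext j
    simp only [Finset.mem_union, Finset.mem_filter, Finset.mem_univ, true_and, hS, hT]
    simpa using htot j
  have hcard : 2 * n - 1 ≤ S.card + T.card := by
    have h1 := Finset.card_union_le S T
    rw [hST, Finset.card_univ, Fintype.card_fin] at h1
    omega
  by_cases hc : n ≤ S.card
  · -- case A : x ≻ v j for j ∈ S; exponents decreasing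
    apply case_lemma n m hn hm x hx W p v hp (fun j => (hv j).1) q hocc horder S hc
      (fun k => n - k) (fun k hk => Nat.sub_le n k)
    intro k hk j j' hj hj' s t
    have hxv : WGt x (v j') := by
      rw [hS] at hj'
      exact (Finset.mem_filter.mp hj').2
    have : n - k = (n - (k + 1)) + 1 := by omega
    rw [this, flatten_replicate_succ, List.append_assoc]
    exact wgt_extend hxv _ _ _
  · -- case B : v j ≻ x for j ∈ T; exponents increasing
    have hcT : n ≤ T.card := by omega
    apply case_lemma n m hn hm x hx W p v hp (fun j => (hv j).1) q hocc horder T hcT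
      (fun k => k) (fun k hk => hk.le)
    intro k hk j j' hj hj' s t
    have hvx : WGt (v j) x := by
      rw [hT] at hj
      exact (Finset.mem_filter.mp hj).2
    rw [flatten_replicate_succ (x := x) (e := k), List.append_assoc]
    exact wgt_extend hvx _ _ _
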